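/- arXiv:2109.06900 — 3 statements merged into one kernel-verified Lean document; each statement's English description precedes it below -/
import Mathlib

section
/- Let d ≥ 1, let A be a Hermitian d×d complex matrix, and let g be a real-valued concave function on the set of d×d density matrices (i.e. g(∑ₖ pₖ ρₖ) ≥ ∑ₖ pₖ g(ρₖ) for all finite convex combinations) such that for every unit vector ψ ∈ ℂ^d one has (ΔA)²_ψ := ⟨ψ, A²ψ⟩ − ⟨ψ, Aψ⟩² ≤ g(|ψ⟩⟨ψ|). Then every density matrix ρ satisfies (ΔA)²_ρ := Tr(A²ρ) − (Tr(Aρ))² ≤ g(ρ). -/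
open Matrix BigOperators
open scoped ComplexOrder

/-- A density matrix: positive semidefinite with unit trace. -/
def IsDensity {d : ℕ} (ρ : Matrix (Fin d) (Fin d) ℂ) : Prop :=
  ρ.PosSemidef ∧ ρ.trace = 1

/-- The rank-one projection |ψ⟩⟨ψ|. -/
def ketbra {d : ℕ} (ψ : Fin d → ℂ) : Matrix (Fin d) (Fin d) ℂ :=
  Matrix.vecMulVec ψ (star ψ)

/-- Pure-state variance (ΔA)²_ψ = ⟨ψ, A²ψ⟩ − ⟨ψ, Aψ⟩². -/
noncomputable def pureVar {d : ℕ} (A : Matrix (Fin d) (Fin d) ℂ) (ψ : Fin d → ℂ) : ℝ :=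
  (star ψ ⬝ᵥ (A * A).mulVec ψ).re - ((star ψ ⬝ᵥ A.mulVec ψ).re) ^ 2

/-- Mixed-state variance (ΔA)²_ρ = Tr(A²ρ) − (Tr(Aρ))². -/
noncomputable def mixVar {d : ℕ} (A ρ : Matrix (Fin d) (Fin d) ℂ) : ℝ :=
  ((A * A * ρ).trace).re - (((A * ρ).trace).re) ^ 2

/-- Concavity of a real-valued function on density matrices:
`g(∑ₖ pₖ ρₖ) ≥ ∑ₖ pₖ g(ρₖ)` for all finite convex combinations of density matrices. -/
def ConcaveOnDensities {d : ℕ} (g : Matrix (Fin d) (Fin d) ℂ → ℝ) : Prop :=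
  ∀ (m : ℕ) (p : Fin m → ℝ) (σ : Fin m → Matrix (Fin d) (Fin d) ℂ),
    (∀ k, 0 ≤ p k) → (∑ k, p k) = 1 → (∀ k, IsDensity (σ k)) →
      (∑ k, p k * g (σ k)) ≤ g (∑ k, p k • σ k)

/-! ### Auxiliary lemmas -/

lemma trace_mul_ketbra {d : ℕ} (B : Matrix (Fin d) (Fin d) ℂ) (ψ : Fin d → ℂ) :
    (B * ketbra ψ).trace = star ψ ⬝ᵥ B.mulVec ψ := by
  simp only [Matrix.trace, Matrix.diag, Matrix.mul_apply, ketbra, vecMulVec_apply,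
    dotProduct, mulVec, Pi.star_apply, Finset.mul_sum]
  exact Finset.sum_congr rfl fun i _ => Finset.sum_congr rfl fun j _ => by ring

lemma trace_ketbra {d : ℕ} (ψ : Fin d → ℂ) :
    (ketbra ψ).trace = star ψ ⬝ᵥ ψ := by
  simp only [Matrix.trace, Matrix.diag, ketbra, vecMulVec_apply, dotProduct, Pi.star_apply]
  exact Finset.sum_congr rfl fun i _ => by ring

lemma ketbra_density {d : ℕ} (ψ : Fin d → ℂ) (hψ : star ψ ⬝ᵥ ψ = 1) :
    IsDensity (ketbra ψ) := by
  refine ⟨Matrix.PosSemidef.of_dotProduct_mulVec_nonneg ?_ ?_, by rw [trace_ketbra, hψ]⟩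
  · ext i j
    simp [ketbra, vecMulVec_apply, conjTranspose_apply, mul_comm]
  · intro x
    have hcalc : star x ⬝ᵥ (ketbra ψ).mulVec x = star (star ψ ⬝ᵥ x) * (star ψ ⬝ᵥ x) := by
      simp only [ketbra, dotProduct, mulVec, vecMulVec_apply, Pi.star_apply, star_sum,
        star_mul', star_star, Finset.mul_sum, Finset.sum_mul]
      rw [Finset.sum_comm]
      exact Finset.sum_congr rfl fun i _ => Finset.sum_congr rfl fun j _ => by ring
    rw [hcalc]
    exact star_mul_self_nonneg _

lemma ketbra_smul_real {d : ℕ} (r : ℝ) (ψ : Fin d → ℂ) :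
    ketbra (r • ψ) = (r ^ 2) • ketbra ψ := by
  ext i j
  simp only [ketbra, vecMulVec_apply, Pi.smul_apply, Pi.star_apply, Matrix.smul_apply,
    Complex.real_smul, star_mul', RCLike.star_def, Complex.conj_ofReal]
  push_cast
  ring

lemma dot_smul_real {d : ℕ} (B : Matrix (Fin d) (Fin d) ℂ) (r : ℝ) (ψ : Fin d → ℂ) :
    star (r • ψ) ⬝ᵥ B.mulVec (r • ψ) = (r ^ 2 : ℝ) • (star ψ ⬝ᵥ B.mulVec ψ) := by
  rw [← trace_mul_ketbra, ← trace_mul_ketbra, ketbra_smul_real, Matrix.mul_smul,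
    Matrix.trace_smul]

lemma dot_self_smul_real {d : ℕ} (r : ℝ) (ψ : Fin d → ℂ) :
    star (r • ψ) ⬝ᵥ (r • ψ) = (r ^ 2 : ℝ) • (star ψ ⬝ᵥ ψ) := by
  rw [← trace_ketbra, ← trace_ketbra, ketbra_smul_real, Matrix.trace_smul]

lemma dot_self_eq_normSq {d : ℕ} (ψ : Fin d → ℂ) :
    star ψ ⬝ᵥ ψ = ((∑ i, Complex.normSq (ψ i) : ℝ) : ℂ) := by
  rw [dotProduct]
  push_cast
  exact Finset.sum_congr rfl fun i _ => by
    simp [Pi.star_apply, Complex.normSq_eq_conj_mul_self]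

/-- The quantity `⟨w,Aw⟩.re − t‖w‖²` for an (unnormalized) vector. -/
noncomputable def hval {d : ℕ} (A : Matrix (Fin d) (Fin d) ℂ) (t : ℝ) (w : Fin d → ℂ) : ℝ :=
  (star w ⬝ᵥ A.mulVec w).re - t * (star w ⬝ᵥ w).re

lemma hval_eq_trace {d : ℕ} (A : Matrix (Fin d) (Fin d) ℂ) (t : ℝ) (w : Fin d → ℂ) :
    hval A t w = ((A * ketbra w).trace).re - t * ((ketbra w).trace).re := by
  rw [hval, trace_mul_ketbra, trace_ketbra]

lemma ketbra_rot {d : ℕ} (x y : Fin d → ℂ) (θ : ℝ) :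
    ketbra (Real.cos θ • x + Real.sin θ • y) +
      ketbra ((-Real.sin θ) • x + Real.cos θ • y) = ketbra x + ketbra y := by
  have hcs : ((Real.cos θ : ℂ)) ^ 2 + ((Real.sin θ : ℂ)) ^ 2 = 1 := by
    have := Real.sin_sq_add_cos_sq θ
    push_cast
    rw [add_comm]
    exact_mod_cast congrArg (Complex.ofReal) this
  ext i j
  simp only [ketbra, Matrix.add_apply, vecMulVec_apply, Pi.add_apply, Pi.smul_apply,
    Pi.star_apply, Complex.real_smul, star_add, star_mul', Complex.star_def, map_neg,
    Complex.conj_ofReal, Complex.ofReal_neg]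
  linear_combination (x i * (starRingEnd ℂ) (x j) + y i * (starRingEnd ℂ) (y j)) * hcs

lemma hval_rot {d : ℕ} (A : Matrix (Fin d) (Fin d) ℂ) (t : ℝ) (x y : Fin d → ℂ) (θ : ℝ) :
    hval A t (Real.cos θ • x + Real.sin θ • y) +
      hval A t ((-Real.sin θ) • x + Real.cos θ • y) = hval A t x + hval A t y := by
  have h := ketbra_rot x y θ
  simp only [hval_eq_trace]
  have h1 : (A * ketbra (Real.cos θ • x + Real.sin θ • y)).trace
      + (A * ketbra ((-Real.sin θ) • x + Real.cos θ • y)).trace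
      = (A * ketbra x).trace + (A * ketbra y).trace := by
    rw [← Matrix.trace_add, ← Matrix.trace_add, ← mul_add, ← mul_add, h]
  have h2 : (ketbra (Real.cos θ • x + Real.sin θ • y)).trace
      + (ketbra ((-Real.sin θ) • x + Real.cos θ • y)).trace
      = (ketbra x).trace + (ketbra y).trace := by
    rw [← Matrix.trace_add, ← Matrix.trace_add, h]
  have h1' := congrArg Complex.re h1
  have h2' := congrArg Complex.re h2
  simp only [Complex.add_re] at h1' h2'
  linear_combination h1' - t * h2'

lemma hval_cont {d : ℕ} (A : Matrix (Fin d) (Fin d) ℂ) (t : ℝ) (x y : Fin d → ℂ) :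
    Continuous fun θ : ℝ => hval A t (Real.cos θ • x + Real.sin θ • y) := by
  unfold hval
  simp only [dotProduct, mulVec, Pi.add_apply, Pi.smul_apply, Pi.star_apply, Complex.real_smul]
  fun_prop

/-- Rotate a pair of vectors so the first gets `hval = 0`, preserving `ketbra` sum. -/
lemma pair_fix {d : ℕ} (A : Matrix (Fin d) (Fin d) ℂ) (t : ℝ) (x y : Fin d → ℂ)
    (hx : 0 < hval A t x) (hy : hval A t y < 0) :
    ∃ x' y' : Fin d → ℂ, ketbra x' + ketbra y' = ketbra x + ketbra y ∧
      hval A t x' = 0 ∧ hval A t x' + hval A t y' = hval A t x + hval A t y := by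
  set f : ℝ → ℝ := fun θ => hval A t (Real.cos θ • x + Real.sin θ • y) with hf
  have hf0 : f 0 = hval A t x := by simp [hf]
  have hfπ : f (Real.pi / 2) = hval A t y := by simp [hf]
  have hcont : ContinuousOn f (Set.Icc 0 (Real.pi / 2)) := (hval_cont A t x y).continuousOn
  have hle : (0:ℝ) ≤ Real.pi / 2 := by positivity
  have hmem : (0:ℝ) ∈ Set.Icc (f (Real.pi / 2)) (f 0) := by
    rw [hf0, hfπ]; exact ⟨le_of_lt hy, le_of_lt hx⟩
  obtain ⟨θ, _, hθ⟩ := intermediate_value_Icc' hle hcont hmem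
  refine ⟨Real.cos θ • x + Real.sin θ • y, (-Real.sin θ) • x + Real.cos θ • y,
    ketbra_rot x y θ, hθ, ?_⟩
  rw [hval_rot]

/-- Any family of (unnormalized) vectors with total `hval` zero can be rotated into one
with all `hval`s zero, preserving the sum of the rank-one projections. -/
lemma equalize {d m : ℕ} (A : Matrix (Fin d) (Fin d) ℂ) (t : ℝ) :
    ∀ (n : ℕ) (w : Fin m → Fin d → ℂ),
      (∑ k, hval A t (w k)) = 0 →
      (Finset.univ.filter fun k => hval A t (w k) ≠ 0).card ≤ n →
      ∃ w' : Fin m → Fin d → ℂ,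
        (∑ k, ketbra (w' k)) = (∑ k, ketbra (w k)) ∧ ∀ k, hval A t (w' k) = 0 := by
  intro n
  induction n with
  | zero =>
    intro w hsum hcard
    refine ⟨w, rfl, fun k => ?_⟩
    by_contra hk
    have : k ∈ Finset.univ.filter fun k => hval A t (w k) ≠ 0 := by
      simp [hk]
    have := Finset.card_pos.mpr ⟨k, this⟩
    omega
  | succ n ih =>
    intro w hsum hcard
    by_cases hall : ∀ k, hval A t (w k) = 0
    · exact ⟨w, rfl, hall⟩
    push_neg at hall
    obtain ⟨i₀, hi₀⟩ := hall
    -- find a positive and a negative index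
    have key : ∃ i j : Fin m, i ≠ j ∧ 0 < hval A t (w i) ∧ hval A t (w j) < 0 := by
      rcases lt_or_gt_of_ne hi₀ with hneg | hpos
      · have hex : ∃ j, 0 < hval A t (w j) := by
          by_contra hcon
          push_neg at hcon
          have h1 : ∑ k, hval A t (w k) < 0 :=
            Finset.sum_neg' (fun k _ => hcon k) ⟨i₀, Finset.mem_univ _, hneg⟩
          linarith [hsum ▸ h1]
        obtain ⟨j, hjpos⟩ := hex
        exact ⟨j, i₀, fun h => by rw [h] at hjpos; linarith, hjpos, hneg⟩
      · have hex : ∃ j, hval A t (w j) < 0 := by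
          by_contra hcon
          push_neg at hcon
          have h1 : 0 < ∑ k, hval A t (w k) :=
            Finset.sum_pos' (fun k _ => hcon k) ⟨i₀, Finset.mem_univ _, hpos⟩
          linarith [hsum ▸ h1]
        obtain ⟨j, hjneg⟩ := hex
        exact ⟨i₀, j, fun h => by rw [h] at hpos; linarith, hpos, hjneg⟩
    obtain ⟨i, j, hij, hi, hj⟩ := key
    obtain ⟨x', y', hkb, hx0, hsum2⟩ := pair_fix A t (w i) (w j) hi hj
    set w' : Fin m → Fin d → ℂ := Function.update (Function.update w i x') j y' with hw'
    have hw'i : w' i = x' := by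
      rw [hw', Function.update_of_ne hij, Function.update_self]
    have hw'j : w' j = y' := by rw [hw', Function.update_self]
    have hw'k : ∀ k, k ≠ i → k ≠ j → w' k = w k := fun k hki hkj => by
      rw [hw', Function.update_of_ne hkj, Function.update_of_ne hki]
    -- generic splitting of a sum over univ at i and j
    have split : ∀ {β : Type} [inst : AddCommMonoid β] (F : (Fin d → ℂ) → β)
        (u : Fin m → Fin d → ℂ),
        ∑ k, F (u k) = F (u i) + F (u j)
          + ∑ k ∈ (Finset.univ.erase i).erase j, F (u k) := by
      intro β _ F u
      have hjmem : j ∈ Finset.univ.erase i := by simp [Ne.symm hij]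
      rw [← Finset.add_sum_erase _ _ (Finset.mem_univ i),
        ← Finset.add_sum_erase _ _ hjmem, ← add_assoc]
    have hrest : ∀ {β : Type} [inst : AddCommMonoid β] (F : (Fin d → ℂ) → β),
        ∑ k ∈ (Finset.univ.erase i).erase j, F (w' k)
          = ∑ k ∈ (Finset.univ.erase i).erase j, F (w k) := by
      intro β _ F
      refine Finset.sum_congr rfl fun k hk => ?_
      rw [hw'k k (Finset.ne_of_mem_erase (Finset.mem_of_mem_erase hk))
        (Finset.ne_of_mem_erase hk)]
    have hkb' : (∑ k, ketbra (w' k)) = ∑ k, ketbra (w k) := by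
      rw [split ketbra w', split ketbra w, hrest, hw'i, hw'j, hkb]
    have hsum' : (∑ k, hval A t (w' k)) = 0 := by
      rw [split (hval A t) w', hrest, hw'i, hw'j]
      rw [split (hval A t) w] at hsum
      linarith
    have hcard' : (Finset.univ.filter fun k => hval A t (w' k) ≠ 0).card ≤ n := by
      have hsub : (Finset.univ.filter fun k => hval A t (w' k) ≠ 0)
          ⊆ (Finset.univ.filter fun k => hval A t (w k) ≠ 0).erase i := by
        intro k hk
        simp only [Finset.mem_filter, Finset.mem_univ, true_and] at hk
        rcases eq_or_ne k i with rfl | hki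
        · rw [hw'i] at hk; exact absurd hx0 hk
        rcases eq_or_ne k j with rfl | hkj
        · exact Finset.mem_erase.mpr ⟨hki, by simp [ne_of_lt hj]⟩
        · rw [hw'k k hki hkj] at hk
          exact Finset.mem_erase.mpr ⟨hki, by simp [hk]⟩
      have himem : i ∈ Finset.univ.filter fun k => hval A t (w k) ≠ 0 := by
        simp [ne_of_gt hi]
      calc (Finset.univ.filter fun k => hval A t (w' k) ≠ 0).card
          ≤ ((Finset.univ.filter fun k => hval A t (w k) ≠ 0).erase i).card :=
            Finset.card_le_card hsub
        _ = (Finset.univ.filter fun k => hval A t (w k) ≠ 0).card - 1 :=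
            Finset.card_erase_of_mem himem
        _ ≤ n := by omega
    obtain ⟨w'', h1, h2⟩ := ih w' hsum' hcard'
    exact ⟨w'', h1.trans hkb', h2⟩

lemma ketbra_zero {d : ℕ} : ketbra (0 : Fin d → ℂ) = 0 := by
  ext i j; simp [ketbra, vecMulVec_apply]

theorem stmt_2 {d : ℕ} (hd : 1 ≤ d)
    (A : Matrix (Fin d) (Fin d) ℂ) (hA : A.IsHermitian)
    (g : Matrix (Fin d) (Fin d) ℂ → ℝ) (hg : ConcaveOnDensities g)
    (hpure : ∀ ψ : Fin d → ℂ, star ψ ⬝ᵥ ψ = 1 → pureVar A ψ ≤ g (ketbra ψ))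
    (ρ : Matrix (Fin d) (Fin d) ℂ) (hρ : IsDensity ρ) :
    mixVar A ρ ≤ g ρ := by
  obtain ⟨hpsd, htr⟩ := hρ
  have hH := hpsd.1
  set t : ℝ := ((A * ρ).trace).re with ht
  set p : Fin d → ℝ := hH.eigenvalues with hp
  set v : Fin d → Fin d → ℂ := fun k i => (hH.eigenvectorUnitary : Matrix (Fin d) (Fin d) ℂ) i k
    with hv
  have hp0 : ∀ k, 0 ≤ p k := fun k => hpsd.eigenvalues_nonneg k
  -- spectral decomposition
  have hdecomp : ρ = ∑ k, p k • ketbra (v k) := by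
    have hspec := hH.spectral_theorem
    rw [hspec, Unitary.conjStarAlgAut_apply]
    ext i j
    simp only [Matrix.sum_apply, Matrix.smul_apply, Matrix.mul_apply, Matrix.diagonal_apply,
      Function.comp_apply, Matrix.star_apply, ketbra, vecMulVec_apply, Pi.star_apply,
      mul_ite, mul_zero, ite_mul, zero_mul, Finset.sum_ite_eq', Finset.mem_univ, if_true]
    refine Finset.sum_congr rfl fun k _ => ?_
    simp only [Complex.real_smul, hp, RCLike.ofReal_alg, smul_eq_mul, Complex.coe_algebraMap]
    ring
  set w : Fin d → Fin d → ℂ := fun k => Real.sqrt (p k) • v k with hw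
  have hkbw : ∀ k, ketbra (w k) = p k • ketbra (v k) := by
    intro k
    rw [hw]
    simp only [ketbra_smul_real, Real.sq_sqrt (hp0 k)]
  have hρw : ρ = ∑ k, ketbra (w k) := by
    rw [hdecomp]
    exact Finset.sum_congr rfl fun k _ => (hkbw k).symm
  -- total hval is zero
  have htrmul : ∀ (B : Matrix (Fin d) (Fin d) ℂ) (u : Fin d → Fin d → ℂ),
      (B * ∑ k, ketbra (u k)).trace = ∑ k, star (u k) ⬝ᵥ B.mulVec (u k) := by
    intro B u
    rw [Finset.mul_sum, Matrix.trace_sum]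
    exact Finset.sum_congr rfl fun k _ => trace_mul_ketbra B (u k)
  have htrplain : ∀ u : Fin d → Fin d → ℂ,
      (∑ k, ketbra (u k)).trace = ∑ k, star (u k) ⬝ᵥ u k := by
    intro u
    rw [Matrix.trace_sum]
    exact Finset.sum_congr rfl fun k _ => trace_ketbra (u k)
  have hsumhval : ∑ k, hval A t (w k) = 0 := by
    have hE : ∑ k, (star (w k) ⬝ᵥ A.mulVec (w k)).re = t := by
      rw [ht, hρw, htrmul A w, Complex.re_sum]
    have hN : ∑ k, (star (w k) ⬝ᵥ (w k)).re = 1 := by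
      have : (∑ k, ketbra (w k)).trace = 1 := by rw [← hρw, htr]
      rw [htrplain w] at this
      have := congrArg Complex.re this
      rw [Complex.re_sum] at this
      simpa using this
    simp only [hval, Finset.sum_sub_distrib, ← Finset.mul_sum, hE, hN, mul_one, sub_self]
  obtain ⟨w', hkb', hzero⟩ := equalize A t
    (Finset.univ.filter fun k => hval A t (w k) ≠ 0).card w hsumhval le_rfl
  have hρw' : ρ = ∑ k, ketbra (w' k) := by rw [hρw, hkb']
  -- normalize
  set q : Fin d → ℝ := fun k => ∑ i, Complex.normSq (w' k i) with hq
  have hreal : ∀ k, star (w' k) ⬝ᵥ w' k = ((q k : ℝ) : ℂ) := fun k => dot_self_eq_normSq _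
  have hq0 : ∀ k, 0 ≤ q k := fun k =>
    Finset.sum_nonneg fun i _ => Complex.normSq_nonneg _
  have hqzero : ∀ k, q k = 0 → w' k = 0 := by
    intro k hk
    funext i
    have := (Finset.sum_eq_zero_iff_of_nonneg
      (fun i _ => Complex.normSq_nonneg (w' k i))).mp hk i (Finset.mem_univ i)
    exact Complex.normSq_eq_zero.mp this
  set ψ : Fin d → Fin d → ℂ := fun k =>
    if q k = 0 then Pi.single (⟨0, hd⟩ : Fin d) 1 else (Real.sqrt (q k))⁻¹ • w' k with hψ
  have hrsq : ∀ k, q k ≠ 0 → ((Real.sqrt (q k))⁻¹) ^ 2 = (q k)⁻¹ := by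
    intro k hk
    rw [inv_pow, Real.sq_sqrt (hq0 k)]
  have hsingle : star (Pi.single (⟨0, hd⟩ : Fin d) 1 : Fin d → ℂ)
      ⬝ᵥ Pi.single (⟨0, hd⟩ : Fin d) 1 = 1 := by
    simp [dotProduct, Pi.single_apply, apply_ite (star : ℂ → ℂ), ite_mul, mul_ite]
  have hunit : ∀ k, star (ψ k) ⬝ᵥ ψ k = 1 := by
    intro k
    rw [hψ]
    by_cases hk : q k = 0
    · simpa [hk] using hsingle
    · simp only [hk, if_false]
      rw [dot_self_smul_real, hreal k, hrsq k hk, Complex.real_smul, ← Complex.ofReal_mul,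
        inv_mul_cancel₀ hk, Complex.ofReal_one]
  have hqk : ∀ k, q k • ketbra (ψ k) = ketbra (w' k) := by
    intro k
    rw [hψ]
    by_cases hk : q k = 0
    · rw [hk, hqzero k hk, ketbra_zero, zero_smul]
    · simp only [hk, if_false]
      rw [ketbra_smul_real, hrsq k hk, smul_smul, mul_inv_cancel₀ hk, one_smul]
  have hρψ : ρ = ∑ k, q k • ketbra (ψ k) := by
    rw [hρw']
    exact Finset.sum_congr rfl fun k _ => (hqk k).symm
  have hsumq : ∑ k, q k = 1 := by
    have h1 : (∑ k, ketbra (w' k)).trace = 1 := by rw [← hρw', htr]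
    rw [htrplain w'] at h1
    have h2 := congrArg Complex.re h1
    rw [Complex.re_sum] at h2
    simp only [hreal, Complex.ofReal_re, Complex.one_re] at h2
    exact h2
  -- means and second moments
  set a : Fin d → ℝ := fun k => (star (ψ k) ⬝ᵥ A.mulVec (ψ k)).re with ha
  set b : Fin d → ℝ := fun k => (star (ψ k) ⬝ᵥ (A * A).mulVec (ψ k)).re with hb
  have hmean : ∀ k, q k ≠ 0 → a k = t := by
    intro k hk
    have hEk : (star (w' k) ⬝ᵥ A.mulVec (w' k)).re = t * q k := by
      have := hzero k
      rw [hval] at this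
      have hNk : (star (w' k) ⬝ᵥ w' k).re = q k := by rw [hreal k, Complex.ofReal_re]
      rw [hNk] at this
      linarith
    simp only [ha, hψ, hk, if_false]
    rw [dot_smul_real, hrsq k hk, Complex.real_smul, Complex.re_ofReal_mul, hEk]
    field_simp
  have hsecond : ∀ k, q k * b k = (star (w' k) ⬝ᵥ (A * A).mulVec (w' k)).re := by
    intro k
    by_cases hk : q k = 0
    · rw [hk, zero_mul, hqzero k hk]
      simp [dotProduct]
    · simp only [hb, hψ, hk, if_false]
      rw [dot_smul_real, hrsq k hk, Complex.real_smul, Complex.re_ofReal_mul]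
      field_simp
  have hA2 : ((A * A * ρ).trace).re = ∑ k, q k * b k := by
    rw [hρw', htrmul (A * A) w', Complex.re_sum]
    exact Finset.sum_congr rfl fun k _ => (hsecond k).symm
  -- putting it together
  have hmixeq : mixVar A ρ = ∑ k, q k * pureVar A (ψ k) := by
    rw [mixVar, ← ht, hA2]
    have : ∑ k, q k * pureVar A (ψ k) = ∑ k, (q k * b k - q k * t ^ 2) := by
      refine Finset.sum_congr rfl fun k _ => ?_
      by_cases hk : q k = 0
      · rw [hk]; ring
      · have hbk : pureVar A (ψ k) = b k - (a k) ^ 2 := rfl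
        rw [hbk, hmean k hk]; ring
    rw [this, Finset.sum_sub_distrib, ← Finset.sum_mul, hsumq, one_mul]
  rw [hmixeq, hρψ]
  calc ∑ k, q k * pureVar A (ψ k) ≤ ∑ k, q k * g (ketbra (ψ k)) := by
        refine Finset.sum_le_sum fun k _ => ?_
        exact mul_le_mul_of_nonneg_left (hpure (ψ k) (hunit k)) (hq0 k)
    _ ≤ g (∑ k, q k • ketbra (ψ k)) :=
        hg d q (fun k => ketbra (ψ k)) hq0 hsumq (fun k => ketbra_density _ (hunit k))
end

section
/- Let A be a Hermitian d×d complex matrix and ρ a d×d density matrix. Then ρ commutes with A, i.e. ρA = Aρ, if and only if there exists a pure-state decomposition ρ = ∑ₖ pₖ |ψₖ⟩⟨ψₖ| (pₖ ≥ 0, ∑ₖ pₖ = 1, ψₖ unit vectors) whose average variance vanishes: ∑ₖ pₖ (ΔA)²_{ψₖ} = 0, where (ΔA)²_ψ = ⟨ψ, A²ψ⟩ − ⟨ψ, Aψ⟩². Equivalently, ρ commutes with A exactly when ρ admits a pure-state decomposition in which every ψₖ is an eigenvector of A. (Since the quantum Fisher information is the convex roof of four times the variance, this is the statement F_Q[ρ,A]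 = 0 ⟺ [ρ,A] = 0.) -/
open Matrix BigOperators
open scoped ComplexOrder
set_option maxHeartbeats 1000000

lemma ketbra_mulVec {d : ℕ} (ψ v : Fin d → ℂ) :
    (ketbra ψ) *ᵥ v = (star ψ ⬝ᵥ v) • ψ := by
  ext i
  simp only [ketbra, Matrix.mulVec, Matrix.vecMulVec_apply, dotProduct, Pi.smul_apply,
    smul_eq_mul, Finset.sum_mul]
  exact Finset.sum_congr rfl fun j _ => by ring

lemma mul_ketbra {d : ℕ} (A : Matrix (Fin d) (Fin d) ℂ) (ψ : Fin d → ℂ) {c : ℂ}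
    (h : A *ᵥ ψ = c • ψ) : A * ketbra ψ = c • ketbra ψ := by
  ext i j
  have := congrFun h i
  simp only [Pi.smul_apply, smul_eq_mul] at this
  simp only [ketbra, Matrix.mul_apply, Matrix.vecMulVec_apply, Matrix.smul_apply, smul_eq_mul]
  calc ∑ l, A i l * (ψ l * star ψ j) = (∑ l, A i l * ψ l) * star ψ j := by
        rw [Finset.sum_mul]; exact Finset.sum_congr rfl fun j _ => by ring
    _ = c * (ψ i * star ψ j) := by rw [show (∑ l, A i l * ψ l) = (A *ᵥ ψ) i from rfl, this]; ring

lemma ketbra_mul {d : ℕ} {A : Matrix (Fin d) (Fin d) ℂ} (hA : A.IsHermitian) (ψ : Fin d → ℂ)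
    {c : ℂ} (h : A *ᵥ ψ = c • ψ) (hc : (starRingEnd ℂ) c = c) :
    ketbra ψ * A = c • ketbra ψ := by
  have hst : star ψ ᵥ* A = c • star ψ := by
    have : star (A *ᵥ ψ) = star (c • ψ) := congrArg star h
    rw [star_mulVec, hA.eq, star_smul] at this
    rw [this, starRingEnd_apply] at *
    rw [hc]
  ext i j
  simp only [ketbra, Matrix.mul_apply, Matrix.vecMulVec_apply, Matrix.smul_apply, smul_eq_mul]
  have := congrFun hst j
  simp only [Pi.smul_apply, smul_eq_mul] at this
  calc ∑ l, ψ i * star ψ l * A l j = ψ i * (∑ l, star ψ l * A l j) := by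
        rw [Finset.mul_sum]; exact Finset.sum_congr rfl fun l _ => by ring
    _ = c * (ψ i * star ψ j) := by
        rw [show (∑ l, star ψ l * A l j) = (star ψ ᵥ* A) j from rfl, this]; ring

lemma conj_mean {d : ℕ} {A : Matrix (Fin d) (Fin d) ℂ} (hA : A.IsHermitian) (ψ : Fin d → ℂ) :
    (starRingEnd ℂ) (star ψ ⬝ᵥ A *ᵥ ψ) = star ψ ⬝ᵥ A *ᵥ ψ := by
  have h1 : star (A *ᵥ ψ) ⬝ᵥ ψ = star ψ ⬝ᵥ A *ᵥ ψ := by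
    rw [star_mulVec, hA.eq, ← Matrix.dotProduct_mulVec]
  rw [starRingEnd_apply]
  conv_lhs => rw [Matrix.star_dotProduct]
  rw [star_star]
  exact h1

lemma dot_self_eq_var {d : ℕ} {A : Matrix (Fin d) (Fin d) ℂ} (hA : A.IsHermitian)
    {ψ : Fin d → ℂ} (hψ : star ψ ⬝ᵥ ψ = 1) :
    star (A *ᵥ ψ - (star ψ ⬝ᵥ A *ᵥ ψ) • ψ) ⬝ᵥ (A *ᵥ ψ - (star ψ ⬝ᵥ A *ᵥ ψ) • ψ)
      = (pureVar A ψ : ℂ) := by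
  set c := star ψ ⬝ᵥ A *ᵥ ψ with hcdef
  have hc : (starRingEnd ℂ) c = c := conj_mean hA ψ
  have hcim : c.im = 0 := by
    have := congrArg Complex.im hc
    simp only [Complex.conj_im] at this
    linarith
  set w := A *ᵥ ψ - c • ψ with hw
  have hsA : star (A *ᵥ ψ) ⬝ᵥ (A *ᵥ ψ) = star ψ ⬝ᵥ (A * A) *ᵥ ψ := by
    rw [star_mulVec, hA.eq, ← Matrix.dotProduct_mulVec, Matrix.mulVec_mulVec]
  have hAc : star (A *ᵥ ψ) ⬝ᵥ ψ = c := by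
    rw [star_mulVec, hA.eq, ← Matrix.dotProduct_mulVec]
  have key : star w ⬝ᵥ w = star ψ ⬝ᵥ (A * A) *ᵥ ψ - c ^ 2 := by
    simp only [hw, star_sub, star_smul, sub_dotProduct, dotProduct_sub,
      smul_dotProduct, dotProduct_smul, smul_eq_mul, hsA, hAc, hψ, ← hcdef,
      Complex.star_def, hc]
    ring
  have hnn : 0 ≤ star w ⬝ᵥ w := dotProduct_star_self_nonneg w
  have him : (star w ⬝ᵥ w).im = 0 := by
    have := (Complex.le_def.mp hnn).2
    simpa using this.symm
  have hofre : star w ⬝ᵥ w = ((star w ⬝ᵥ w).re : ℂ) := by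
    apply Complex.ext <;> simp [him]
  have hre : (star w ⬝ᵥ w).re = pureVar A ψ := by
    rw [key]
    simp [pureVar, Complex.sub_re, pow_two, Complex.mul_re, hcim, ← hcdef]
  rw [hofre, hre]

lemma pureVar_nonneg {d : ℕ} {A : Matrix (Fin d) (Fin d) ℂ} (hA : A.IsHermitian)
    {ψ : Fin d → ℂ} (hψ : star ψ ⬝ᵥ ψ = 1) : 0 ≤ pureVar A ψ := by
  have h := dot_self_eq_var hA hψ
  have hnn := dotProduct_star_self_nonneg (A *ᵥ ψ - (star ψ ⬝ᵥ A *ᵥ ψ) • ψ)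
  rw [h] at hnn
  exact_mod_cast hnn

lemma eig_of_pureVar_zero {d : ℕ} {A : Matrix (Fin d) (Fin d) ℂ} (hA : A.IsHermitian)
    {ψ : Fin d → ℂ} (hψ : star ψ ⬝ᵥ ψ = 1) (h : pureVar A ψ = 0) :
    A *ᵥ ψ = (star ψ ⬝ᵥ A *ᵥ ψ) • ψ := by
  have hd := dot_self_eq_var hA hψ
  rw [h] at hd
  push_cast at hd
  have := dotProduct_star_self_eq_zero.mp hd
  rwa [sub_eq_zero] at this

lemma pureVar_zero_of_eig {d : ℕ} {A : Matrix (Fin d) (Fin d) ℂ} (hA : A.IsHermitian)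
    {ψ : Fin d → ℂ} (hψ : star ψ ⬝ᵥ ψ = 1) {c : ℂ} (h : A *ᵥ ψ = c • ψ) :
    pureVar A ψ = 0 := by
  have hcval : star ψ ⬝ᵥ A *ᵥ ψ = c := by
    rw [h]
    simp [dotProduct_smul, hψ]
  have hd := dot_self_eq_var hA hψ
  rw [hcval, h, sub_self] at hd
  simpa using hd.symm

/-- `ρ` commutes with `A` iff `ρ` admits a pure-state decomposition with vanishing
average variance (i.e. the quantum Fisher information of `ρ` with generator `A` vanishes). -/
theorem stmt_4 {d : ℕ}
    (A : Matrix (Fin d) (Fin d) ℂ) (hA : A.IsHermitian)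
    (ρ : Matrix (Fin d) (Fin d) ℂ) (hρ : IsDensity ρ) :
    ρ * A = A * ρ ↔
      ∃ (m : ℕ) (p : Fin m → ℝ) (ψ : Fin m → (Fin d → ℂ)),
        (∀ k, 0 ≤ p k) ∧ (∑ k, p k) = 1 ∧
        (∀ k, star (ψ k) ⬝ᵥ ψ k = 1) ∧
        ρ = (∑ k, p k • ketbra (ψ k)) ∧
        (∑ k, p k * pureVar A (ψ k)) = 0 := by
  constructor
  · -- forward direction
    intro hcomm
    classical
    set T := Matrix.toEuclideanLin A with hT
    set S := Matrix.toEuclideanLin ρ with hS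
    have hTsym : T.IsSymmetric := Matrix.isHermitian_iff_isSymmetric.mp hA
    have hSsym : S.IsSymmetric := Matrix.isHermitian_iff_isSymmetric.mp hρ.1.1
    have hC : Commute T S := by
      apply LinearMap.ext
      intro x
      show WithLp.toLp 2 (A *ᵥ (ρ *ᵥ x.ofLp)) = WithLp.toLp 2 (ρ *ᵥ (A *ᵥ x.ofLp))
      rw [Matrix.mulVec_mulVec, Matrix.mulVec_mulVec, hcomm]
    have hn : Module.finrank ℂ (EuclideanSpace ℂ (Fin d)) = d := finrank_euclideanSpace_fin
    have hInt := LinearMap.IsSymmetric.directSum_isInternal_of_commute hTsym hSsym hC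
    have hOrth := LinearMap.IsSymmetric.orthogonalFamily_eigenspace_inf_eigenspace hTsym hSsym
    have hInd : iSupIndep (fun i : ℂ × ℂ =>
        Module.End.eigenspace T i.2 ⊓ Module.End.eigenspace S i.1) :=
      ((DirectSum.isInternal_submodule_iff_iSupIndep_and_iSup_eq_top _).mp hInt).1
    haveI : Fintype {i : ℂ × ℂ //
        Module.End.eigenspace T i.2 ⊓ Module.End.eigenspace S i.1 ≠ ⊥} :=
      hInd.fintypeNeBotOfFiniteDimensional
    have hInt' := DirectSum.isInternal_ne_bot_iff.mpr hInt
    have hOrth' := hOrth.comp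
      (f := (Subtype.val : {i : ℂ × ℂ //
        Module.End.eigenspace T i.2 ⊓ Module.End.eigenspace S i.1 ≠ ⊥} → ℂ × ℂ))
      Subtype.val_injective
    set b := hInt'.subordinateOrthonormalBasis hn hOrth' with hb
    set j := fun a => hInt'.subordinateOrthonormalBasisIndex hn a hOrth' with hj
    set idx := fun a => ((j a : {i : ℂ × ℂ //
        Module.End.eigenspace T i.2 ⊓ Module.End.eigenspace S i.1 ≠ ⊥}) : ℂ × ℂ) with hidx
    set ψ : Fin d → (Fin d → ℂ) := fun a => (b a : Fin d → ℂ) with hψdef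
    have hmem : ∀ a, b a ∈ Module.End.eigenspace T (idx a).2 ⊓ Module.End.eigenspace S (idx a).1 :=
      fun a => hInt'.subordinateOrthonormalBasis_subordinate hn a hOrth'
    have hTb : ∀ a, A *ᵥ ψ a = (idx a).2 • ψ a :=
      fun a => congrArg WithLp.ofLp (Module.End.mem_eigenspace_iff.mp (Submodule.mem_inf.mp (hmem a)).1)
    have hSb : ∀ a, ρ *ᵥ ψ a = (idx a).1 • ψ a :=
      fun a => congrArg WithLp.ofLp (Module.End.mem_eigenspace_iff.mp (Submodule.mem_inf.mp (hmem a)).2)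
    have hdot : ∀ a c, star (ψ a) ⬝ᵥ ψ c = if a = c then 1 else 0 := by
      intro a c
      have := orthonormal_iff_ite.mp b.orthonormal a c
      rw [← this]
      simp [PiLp.inner_apply, dotProduct, RCLike.inner_apply, mul_comm]
      rfl
    have hunit : ∀ a, star (ψ a) ⬝ᵥ ψ a = 1 := by
      intro a
      rw [hdot a a]
      simp
    set p : Fin d → ℝ := fun a => ((idx a).1).re with hpdef
    have hν0 : ∀ a, 0 ≤ (idx a).1 := by
      intro a
      have h2 := hρ.1.dotProduct_mulVec_nonneg (ψ a)
      rw [hSb a] at h2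
      simpa [dotProduct_smul, hunit a] using h2
    have hν : ∀ a, (idx a).1 = (p a : ℂ) := by
      intro a
      have him := (Complex.le_def.mp (hν0 a)).2
      apply Complex.ext
      · simp [hpdef]
      · simp [hpdef, ← him]
    have hp0 : ∀ a, 0 ≤ p a := by
      intro a
      have := (Complex.le_def.mp (hν0 a)).1
      simpa [hpdef] using this
    have hsmulC : ∀ (r : ℝ) (M : Matrix (Fin d) (Fin d) ℂ), r • M = (r : ℂ) • M := by
      intro r M
      ext i k
      simp [Complex.real_smul]
    have hsum_mulVec : ∀ (M : Fin d → Matrix (Fin d) (Fin d) ℂ) (v : Fin d → ℂ),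
        (∑ c, M c) *ᵥ v = ∑ c, M c *ᵥ v := by
      intro M v
      ext i
      simp only [Matrix.mulVec, Matrix.sum_apply, Finset.sum_apply, dotProduct,
        Finset.sum_mul]
      rw [Finset.sum_comm]
    have hdecomp : ρ = ∑ a, p a • ketbra (ψ a) := by
      apply Matrix.toEuclideanLin.injective
      apply Module.Basis.ext b.toBasis
      intro a
      rw [OrthonormalBasis.coe_toBasis]
      show WithLp.toLp 2 (ρ *ᵥ (ψ a)) = WithLp.toLp 2 ((∑ c, p c • ketbra (ψ c)) *ᵥ (ψ a))
      congr 1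
      rw [hSb a, hν a, hsum_mulVec]
      have hterm : ∀ c, (p c • ketbra (ψ c)) *ᵥ (ψ a)
          = (if c = a then (p c : ℂ) • ψ c else 0) := by
        intro c
        rw [hsmulC, Matrix.smul_mulVec, ketbra_mulVec, hdot c a]
        by_cases hca : c = a
        · simp [hca]
        · simp [hca]
      rw [Finset.sum_congr rfl (fun c _ => hterm c)]
      simp
    have htrk : ∀ a, Matrix.trace (ketbra (ψ a)) = 1 := by
      intro a
      have h1 : Matrix.trace (ketbra (ψ a)) = star (ψ a) ⬝ᵥ ψ a := by
        simp [Matrix.trace, ketbra, Matrix.diag, Matrix.vecMulVec_apply, dotProduct,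
          mul_comm]
      rw [h1, hunit a]
    have hpsum : ∑ a, p a = 1 := by
      have htr := hρ.2
      rw [hdecomp, Matrix.trace_sum] at htr
      simp only [Matrix.trace_smul, htrk, smul_eq_mul, mul_one, Complex.real_smul] at htr
      exact_mod_cast htr
    have hvar : ∀ a, pureVar A (ψ a) = 0 :=
      fun a => pureVar_zero_of_eig hA (hunit a) (hTb a)
    exact ⟨d, p, ψ, hp0, hpsum, hunit, hdecomp, by simp [hvar]⟩
  · -- backward direction
    rintro ⟨m, p, ψ, hp, hsum, hunit, hdecomp, hvar⟩
    have h0 : ∀ k ∈ Finset.univ, 0 ≤ p k * pureVar A (ψ k) :=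
      fun k _ => mul_nonneg (hp k) (pureVar_nonneg hA (hunit k))
    have hterm : ∀ k, p k * pureVar A (ψ k) = 0 :=
      fun k => (Finset.sum_eq_zero_iff_of_nonneg h0).mp hvar k (Finset.mem_univ k)
    have hcomm : ∀ k, (p k • ketbra (ψ k)) * A = A * (p k • ketbra (ψ k)) := by
      intro k
      rcases mul_eq_zero.mp (hterm k) with h | h
      · simp [h]
      · have heig := eig_of_pureVar_zero hA (hunit k) h
        have hc := conj_mean hA (ψ k)
        rw [Matrix.smul_mul, Matrix.mul_smul, ketbra_mul hA _ heig hc, mul_ketbra A _ heig]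
    rw [hdecomp, Matrix.sum_mul, Matrix.mul_sum]
    exact Finset.sum_congr rfl fun k _ => hcomm k
end

section
/- (Uniqueness of the direction of the minimal decomposition.) Let n ∈ ℝ³ be a unit vector, let pₖ > 0 be weights with ∑ₖ pₖ = 1 (finite family), let rₖ ∈ ℝ³ be unit vectors, and set r = ∑ₖ pₖ rₖ. If the decomposition attains the minimal average variance, i.e. ∑ₖ pₖ (1 − (n·rₖ)²) = ‖r‖² − (n·r)², then for every k the separation vector rₖ − r is parallel to n, i.e. n × (rₖ − r) = 0. -/
open Matrix BigOperators
open scoped Matrix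

lemma sum_dotProduct_aux {m : ℕ} (f : Fin m → (Fin 3 → ℝ)) (w : Fin 3 → ℝ) :
    (∑ k, f k) ⬝ᵥ w = ∑ k, f k ⬝ᵥ w := by
  simp only [dotProduct, Finset.sum_apply, Finset.sum_mul]
  exact Finset.sum_comm

lemma dotProduct_sum_aux {m : ℕ} (f : Fin m → (Fin 3 → ℝ)) (w : Fin 3 → ℝ) :
    w ⬝ᵥ (∑ k, f k) = ∑ k, w ⬝ᵥ f k := by
  simp only [dotProduct, Finset.sum_apply, Finset.mul_sum]
  exact Finset.sum_comm

lemma perp_norm_aux (n a : Fin 3 → ℝ) (hn : n ⬝ᵥ n = 1) :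
    (a - (n ⬝ᵥ a) • n) ⬝ᵥ (a - (n ⬝ᵥ a) • n) = a ⬝ᵥ a - (n ⬝ᵥ a) ^ 2 := by
  have hcomm : a ⬝ᵥ n = n ⬝ᵥ a := dotProduct_comm a n
  simp only [sub_dotProduct, dotProduct_sub, smul_dotProduct, dotProduct_smul,
    smul_eq_mul, hn, hcomm]
  ring

/-- Uniqueness of the direction of the minimal decomposition: if a pure-state
decomposition {pₖ, rₖ} (in the Bloch representation, with pₖ > 0 and unit vectors rₖ
averaging to r) attains the minimal average variance, i.e.
∑ₖ pₖ (1 − (n·rₖ)²) = ‖r‖² − (n·r)², then every separation vector rₖ − r is parallel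
to n, i.e. n × (rₖ − r) = 0. -/
theorem stmt_19 (n : Fin 3 → ℝ) (hn : n ⬝ᵥ n = 1)
    (m : ℕ) (p : Fin m → ℝ) (r' : Fin m → (Fin 3 → ℝ))
    (hp : ∀ k, 0 < p k) (hp1 : (∑ k, p k) = 1)
    (hr : ∀ k, r' k ⬝ᵥ r' k = 1)
    (r : Fin 3 → ℝ) (hmean : r = ∑ k, p k • r' k)
    (hmin : (∑ k, p k * (1 - (n ⬝ᵥ r' k) ^ 2)) = r ⬝ᵥ r - (n ⬝ᵥ r) ^ 2) :
    ∀ k, n ⨯₃ (r' k - r) = 0 := by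
  classical
  set v : Fin m → (Fin 3 → ℝ) := fun k => r' k - (n ⬝ᵥ r' k) • n with hv
  set V : Fin 3 → ℝ := r - (n ⬝ᵥ r) • n with hV
  have hvv : ∀ k, v k ⬝ᵥ v k = 1 - (n ⬝ᵥ r' k) ^ 2 := by
    intro k
    rw [hv]
    simp only
    rw [perp_norm_aux n (r' k) hn, hr k]
  have hVV : V ⬝ᵥ V = r ⬝ᵥ r - (n ⬝ᵥ r) ^ 2 := perp_norm_aux n r hn
  -- the perpendicular components average to V
  have hsumv : (∑ k, p k • v k) = V := by
    have hnr : n ⬝ᵥ r = ∑ k, p k * (n ⬝ᵥ r' k) := by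
      rw [hmean, dotProduct_sum_aux]
      exact Finset.sum_congr rfl fun k _ => by rw [dotProduct_smul]; rfl
    rw [hV]
    simp only [hv, smul_sub, smul_smul]
    rw [Finset.sum_sub_distrib, ← Finset.sum_smul, ← hnr, ← hmean]
  -- the sum of squared deviations is zero
  have hzero : (∑ k, p k * ((v k - V) ⬝ᵥ (v k - V))) = 0 := by
    have expand : ∀ k, (v k - V) ⬝ᵥ (v k - V)
        = v k ⬝ᵥ v k - 2 * (v k ⬝ᵥ V) + V ⬝ᵥ V := by
      intro k
      simp only [sub_dotProduct, dotProduct_sub, dotProduct_comm V (v k)]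
      ring
    have h1 : (∑ k, p k * (v k ⬝ᵥ V)) = V ⬝ᵥ V := by
      calc (∑ k, p k * (v k ⬝ᵥ V)) = (∑ k, p k • v k) ⬝ᵥ V := by
            rw [sum_dotProduct_aux]
            exact Finset.sum_congr rfl fun k _ => (smul_dotProduct (p k) (v k) V).symm
        _ = V ⬝ᵥ V := by rw [hsumv]
    have h2 : (∑ k, p k * (v k ⬝ᵥ v k)) = V ⬝ᵥ V := by
      calc (∑ k, p k * (v k ⬝ᵥ v k)) = ∑ k, p k * (1 - (n ⬝ᵥ r' k) ^ 2) := by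
            exact Finset.sum_congr rfl fun k _ => by rw [hvv k]
        _ = r ⬝ᵥ r - (n ⬝ᵥ r) ^ 2 := hmin
        _ = V ⬝ᵥ V := hVV.symm
    calc (∑ k, p k * ((v k - V) ⬝ᵥ (v k - V)))
        = ∑ k, (p k * (v k ⬝ᵥ v k) - 2 * (p k * (v k ⬝ᵥ V)) + p k * (V ⬝ᵥ V)) := by
          exact Finset.sum_congr rfl fun k _ => by rw [expand k]; ring
      _ = (∑ k, p k * (v k ⬝ᵥ v k)) - 2 * (∑ k, p k * (v k ⬝ᵥ V))
            + (∑ k, p k) * (V ⬝ᵥ V) := by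
          rw [Finset.sum_add_distrib, Finset.sum_sub_distrib, Finset.mul_sum,
            Finset.sum_mul]
      _ = 0 := by rw [h1, h2, hp1]; ring
  have hterm : ∀ k ∈ Finset.univ, (0:ℝ) ≤ p k * ((v k - V) ⬝ᵥ (v k - V)) := by
    intro k _
    exact mul_nonneg (hp k).le (Finset.sum_nonneg fun i _ => mul_self_nonneg _)
  have heach : ∀ k, v k = V := by
    intro k
    have := (Finset.sum_eq_zero_iff_of_nonneg hterm).mp hzero k (Finset.mem_univ k)
    have h0 : (v k - V) ⬝ᵥ (v k - V) = 0 := by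
      rcases mul_eq_zero.mp this with h | h
      · exact absurd h (hp k).ne'
      · exact h
    have hvk : v k - V = 0 := dotProduct_self_eq_zero.mp h0
    exact sub_eq_zero.mp hvk
  intro k
  have hpar : r' k - r = ((n ⬝ᵥ r' k) - (n ⬝ᵥ r)) • n := by
    have h := heach k
    rw [hv, hV] at h
    simp only at h
    have : r' k - (n ⬝ᵥ r' k) • n = r - (n ⬝ᵥ r) • n := h
    rw [sub_smul]
    calc r' k - r = (r' k - (n ⬝ᵥ r' k) • n) - (r - (n ⬝ᵥ r) • n)
          + ((n ⬝ᵥ r' k) • n - (n ⬝ᵥ r) • n) := by abel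
      _ = (n ⬝ᵥ r' k) • n - (n ⬝ᵥ r) • n := by rw [this]; abel
  rw [hpar, LinearMap.map_smul, cross_self, smul_zero]
end
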